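/- Let Ω ⊂ ℝ^d be bounded and measurable, Ω_i ⊂ Ω measurable with |Ω \ Ω_i| > 0, and let γ : Ω × Ω → [0,∞] be measurable, symmetric, with γ(x,y) ≥ δ |x-y|^{-(d+s(x)+s(y))} for some δ > 0 and measurable s : ℝ^d → [s̲, s̄] ⊂ (0,1). Let A(u,v) := ∫_Ω ∫_Ω (u(x) - u(y))(v(x) - v(y)) γ(x,y) dy dx and V := { v ∈ L²(Ω) : v = 0 a.e. on Ω \ Ω_i, |v|_V < ∞ } with ‖v‖²_V = ‖v‖²_{L²(Ω)} + |v|²_V. Then: (i) |A(u,v)| ≤ |u|_V |v|_V ≤ ‖u‖_V ‖v‖_V for all u, v ∈ V (boundedness), and (ii) there exists c > 0 such that A(v,v) ≥ c ‖v‖²_V for all v ∈ V (coercivity). -/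

import Mathlib

open MeasureTheory
open scoped ENNReal

/-- The energy seminorm squared `|v|²_V = ∫_Ω ∫_Ω (v(x)-v(y))² γ(x,y) dy dx`. -/
noncomputable def seminormVSq {d : ℕ} (Ω : Set (EuclideanSpace ℝ (Fin d)))
    (γ : EuclideanSpace ℝ (Fin d) → EuclideanSpace ℝ (Fin d) → ℝ)
    (v : EuclideanSpace ℝ (Fin d) → ℝ) : ℝ :=
  ∫ x in Ω, ∫ y in Ω, (v x - v y) ^ 2 * γ x y

/-- The energy norm squared `‖v‖²_V = ‖v‖²_{L²(Ω)} + |v|²_V`. -/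
noncomputable def normVSq {d : ℕ} (Ω : Set (EuclideanSpace ℝ (Fin d)))
    (γ : EuclideanSpace ℝ (Fin d) → EuclideanSpace ℝ (Fin d) → ℝ)
    (v : EuclideanSpace ℝ (Fin d) → ℝ) : ℝ :=
  (∫ x in Ω, (v x) ^ 2) + seminormVSq Ω γ v

/-- The bilinear form `A(u,v) = ∫_Ω ∫_Ω (u(x)-u(y))(v(x)-v(y)) γ(x,y) dy dx`. -/
noncomputable def bilinA {d : ℕ} (Ω : Set (EuclideanSpace ℝ (Fin d)))
    (γ : EuclideanSpace ℝ (Fin d) → EuclideanSpace ℝ (Fin d) → ℝ)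
    (u v : EuclideanSpace ℝ (Fin d) → ℝ) : ℝ :=
  ∫ x in Ω, ∫ y in Ω, (u x - u y) * (v x - v y) * γ x y

/-- Membership in the energy space
`V = {v ∈ L²(Ω) : v = 0 a.e. on Ω \ Ωi, |v|_V < ∞}`. -/
def memV {d : ℕ} (Ω Ωi : Set (EuclideanSpace ℝ (Fin d)))
    (γ : EuclideanSpace ℝ (Fin d) → EuclideanSpace ℝ (Fin d) → ℝ)
    (v : EuclideanSpace ℝ (Fin d) → ℝ) : Prop :=
  MemLp v 2 (volume.restrict Ω) ∧
    (∀ᵐ x ∂(volume.restrict (Ω \ Ωi)), v x = 0) ∧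
    IntegrableOn
      (fun p : EuclideanSpace ℝ (Fin d) × EuclideanSpace ℝ (Fin d) =>
        (v p.1 - v p.2) ^ 2 * γ p.1 p.2) (Ω ×ˢ Ω)

/-- The product of two restricted volumes is the restriction of the product volume. -/
lemma prodRestrict_eq {d : ℕ} (A B : Set (EuclideanSpace ℝ (Fin d))) :
    (volume.restrict A).prod (volume.restrict B)
      = (volume : Measure (EuclideanSpace ℝ (Fin d) × EuclideanSpace ℝ (Fin d))).restrict
          (A ×ˢ B) := by
  rw [Measure.prod_restrict, ← Measure.volume_eq_prod]

/-- Fubini for the double set integral. -/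
lemma double_integral_eq {d : ℕ} (Ω : Set (EuclideanSpace ℝ (Fin d)))
    (F : EuclideanSpace ℝ (Fin d) → EuclideanSpace ℝ (Fin d) → ℝ)
    (h : Integrable (fun p : EuclideanSpace ℝ (Fin d) × EuclideanSpace ℝ (Fin d) => F p.1 p.2)
      ((volume.restrict Ω).prod (volume.restrict Ω))) :
    (∫ x in Ω, ∫ y in Ω, F x y)
      = ∫ p, F p.1 p.2 ∂((volume.restrict Ω).prod (volume.restrict Ω)) :=
  integral_integral h

/-- Boundedness `|A(u,v)| ≤ |u|_V |v|_V ≤ ‖u‖_V ‖v‖_V` and coercivity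
`A(v,v) ≥ c ‖v‖²_V` of the variable-order fractional bilinear form on `V`. -/
theorem bilinear_form_bounded_and_coercive
    (d : ℕ) (hd : 1 ≤ d)
    (Ω Ωi : Set (EuclideanSpace ℝ (Fin d)))
    (hΩm : MeasurableSet Ω) (hΩb : Bornology.IsBounded Ω)
    (hΩim : MeasurableSet Ωi) (hsub : Ωi ⊆ Ω)
    (hpos : 0 < volume (Ω \ Ωi))
    (δ slo shi : ℝ) (hδ : 0 < δ) (h0 : 0 < slo) (hss : slo ≤ shi) (h1 : shi < 1)
    (s : EuclideanSpace ℝ (Fin d) → ℝ) (hs : Measurable s)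
    (hsr : ∀ x, slo ≤ s x ∧ s x ≤ shi)
    (γ : EuclideanSpace ℝ (Fin d) → EuclideanSpace ℝ (Fin d) → ℝ)
    (hγm : Measurable (Function.uncurry γ))
    (hγsym : ∀ x y, γ x y = γ y x)
    (hγlb : ∀ x y, δ * ‖x - y‖ ^ (-((d : ℝ) + s x + s y)) ≤ γ x y) :
    (∀ u v : EuclideanSpace ℝ (Fin d) → ℝ, memV Ω Ωi γ u → memV Ω Ωi γ v →
      |bilinA Ω γ u v| ≤ Real.sqrt (seminormVSq Ω γ u) * Real.sqrt (seminormVSq Ω γ v) ∧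
      Real.sqrt (seminormVSq Ω γ u) * Real.sqrt (seminormVSq Ω γ v)
        ≤ Real.sqrt (normVSq Ω γ u) * Real.sqrt (normVSq Ω γ v)) ∧
    (∃ c : ℝ, 0 < c ∧ ∀ v : EuclideanSpace ℝ (Fin d) → ℝ, memV Ω Ωi γ v →
      c * normVSq Ω γ v ≤ bilinA Ω γ v v) := by
  have hγ0 : ∀ x y, 0 ≤ γ x y := fun x y =>
    le_trans (by positivity) (hγlb x y)
  have hsqγm : Measurable (fun p : EuclideanSpace ℝ (Fin d) × EuclideanSpace ℝ (Fin d) =>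
      Real.sqrt (γ p.1 p.2)) := Real.continuous_sqrt.measurable.comp hγm
  -- the square-root reformulation of the seminorm
  have sqrtform : ∀ w : EuclideanSpace ℝ (Fin d) → ℝ, memV Ω Ωi γ w →
      MemLp (fun p : EuclideanSpace ℝ (Fin d) × EuclideanSpace ℝ (Fin d) =>
        (w p.1 - w p.2) * Real.sqrt (γ p.1 p.2)) 2 ((volume.restrict Ω).prod (volume.restrict Ω)) := by
    intro w hw
    have hWm : AEStronglyMeasurable (fun p : EuclideanSpace ℝ (Fin d) × EuclideanSpace ℝ (Fin d) =>
        (w p.1 - w p.2) * Real.sqrt (γ p.1 p.2)) ((volume.restrict Ω).prod (volume.restrict Ω)) :=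
      ((hw.1.1.comp_fst.sub hw.1.1.comp_snd).mul hsqγm.aestronglyMeasurable)
    refine (memLp_two_iff_integrable_sq hWm).2 ?_
    have : (fun p : EuclideanSpace ℝ (Fin d) × EuclideanSpace ℝ (Fin d) =>
        ((w p.1 - w p.2) * Real.sqrt (γ p.1 p.2)) ^ 2)
        = fun p => (w p.1 - w p.2) ^ 2 * γ p.1 p.2 := by
      funext p
      rw [mul_pow, Real.sq_sqrt (hγ0 _ _)]
    rw [this, prodRestrict_eq]
    exact hw.2.2
  have hseminorm_eq : ∀ w : EuclideanSpace ℝ (Fin d) → ℝ, memV Ω Ωi γ w →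
      seminormVSq Ω γ w = ∫ p, ((w p.1 - w p.2) * Real.sqrt (γ p.1 p.2)) ^ 2 ∂((volume.restrict Ω).prod (volume.restrict Ω)) := by
    intro w hw
    have h1 : seminormVSq Ω γ w = ∫ p, (w p.1 - w p.2) ^ 2 * γ p.1 p.2 ∂((volume.restrict Ω).prod (volume.restrict Ω)) := by
      refine double_integral_eq Ω (fun x y => (w x - w y) ^ 2 * γ x y) ?_
      rw [prodRestrict_eq]; exact hw.2.2
    rw [h1]
    refine integral_congr_ae (.of_forall fun p => ?_)
    simp only [mul_pow, Real.sq_sqrt (hγ0 p.1 p.2)]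
  have hL2nonneg : ∀ w : EuclideanSpace ℝ (Fin d) → ℝ,
      (0:ℝ) ≤ ∫ x in Ω, (w x) ^ 2 := fun w => integral_nonneg fun x => sq_nonneg _
  have hseminonneg : ∀ w, memV Ω Ωi γ w → 0 ≤ seminormVSq Ω γ w := by
    intro w hw
    rw [hseminorm_eq w hw]
    exact integral_nonneg fun p => sq_nonneg _
  constructor
  · -- boundedness
    intro u v hu hv
    set U := fun p : EuclideanSpace ℝ (Fin d) × EuclideanSpace ℝ (Fin d) =>
      (u p.1 - u p.2) * Real.sqrt (γ p.1 p.2) with hUdef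
    set V := fun p : EuclideanSpace ℝ (Fin d) × EuclideanSpace ℝ (Fin d) =>
      (v p.1 - v p.2) * Real.sqrt (γ p.1 p.2) with hVdef
    have hU2 : MemLp U 2 ((volume.restrict Ω).prod (volume.restrict Ω)) := sqrtform u hu
    have hV2 : MemLp V 2 ((volume.restrict Ω).prod (volume.restrict Ω)) := sqrtform v hv
    have hUV : Integrable (fun p => U p * V p) ((volume.restrict Ω).prod (volume.restrict Ω)) := by
      have h111 : (1 : ℝ≥0∞) / 1 = 1 / 2 + 1 / 2 := by
        rw [ENNReal.add_halves]; simp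
      have := hV2.smul (φ := U) hU2 (r := 1)
      rw [memLp_one_iff_integrable] at this
      exact this
    have heq : ∀ x y, (u x - u y) * (v x - v y) * γ x y = U (x, y) * V (x, y) := by
      intro x y
      have h := Real.mul_self_sqrt (hγ0 x y)
      simp only [hUdef, hVdef]
      linear_combination (-(u x - u y) * (v x - v y)) * h
    have hbil : bilinA Ω γ u v = ∫ p, U p * V p ∂((volume.restrict Ω).prod (volume.restrict Ω)) := by
      rw [bilinA]
      simp_rw [heq]
      exact double_integral_eq Ω (fun x y => U (x, y) * V (x, y)) hUV
    have hpq : Real.HolderConjugate 2 2 := Real.holderConjugate_iff.mpr ⟨one_lt_two, by norm_num⟩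
    have hU2' : MemLp U (ENNReal.ofReal 2) ((volume.restrict Ω).prod (volume.restrict Ω)) := by rw [ENNReal.ofReal_ofNat]; exact hU2
    have hV2' : MemLp V (ENNReal.ofReal 2) ((volume.restrict Ω).prod (volume.restrict Ω)) := by rw [ENNReal.ofReal_ofNat]; exact hV2
    have hCS := integral_mul_norm_le_Lp_mul_Lq hpq hU2' hV2'
    have hnorm_sq : ∀ W : EuclideanSpace ℝ (Fin d) × EuclideanSpace ℝ (Fin d) → ℝ,
        (fun a => ‖W a‖ ^ (2:ℝ)) = fun a => (W a) ^ 2 := by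
      intro W; funext a
      rw [Real.norm_eq_abs, show ((2:ℝ)) = ((2:ℕ):ℝ) by norm_num, Real.rpow_natCast, sq_abs]
    constructor
    · calc |bilinA Ω γ u v| = |∫ p, U p * V p ∂((volume.restrict Ω).prod (volume.restrict Ω))| := by rw [hbil]
        _ ≤ ∫ p, ‖U p * V p‖ ∂((volume.restrict Ω).prod (volume.restrict Ω)) := by
            rw [← Real.norm_eq_abs]; exact norm_integral_le_integral_norm _
        _ = ∫ p, ‖U p‖ * ‖V p‖ ∂((volume.restrict Ω).prod (volume.restrict Ω)) := by
            refine integral_congr_ae (.of_forall fun p => ?_); simp [norm_mul]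
        _ ≤ (∫ a, ‖U a‖ ^ (2:ℝ) ∂((volume.restrict Ω).prod (volume.restrict Ω))) ^ ((1:ℝ)/2) * (∫ a, ‖V a‖ ^ (2:ℝ) ∂((volume.restrict Ω).prod (volume.restrict Ω))) ^ ((1:ℝ)/2) := hCS
        _ = Real.sqrt (seminormVSq Ω γ u) * Real.sqrt (seminormVSq Ω γ v) := by
            rw [hnorm_sq U, hnorm_sq V, ← hseminorm_eq u hu, ← hseminorm_eq v hv,
              Real.sqrt_eq_rpow, Real.sqrt_eq_rpow]
    · have h1 : seminormVSq Ω γ u ≤ normVSq Ω γ u := by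
        rw [normVSq]; linarith [hL2nonneg u]
      have h2 : seminormVSq Ω γ v ≤ normVSq Ω γ v := by
        rw [normVSq]; linarith [hL2nonneg v]
      exact mul_le_mul (Real.sqrt_le_sqrt h1) (Real.sqrt_le_sqrt h2)
        (Real.sqrt_nonneg _) (Real.sqrt_nonneg _)
  · -- coercivity
    obtain ⟨r, hr⟩ := (Metric.isBounded_iff_subset_closedBall 0).1 hΩb
    set M : ℝ := max 1 (2 * r) with hMdef
    have hM1 : (1:ℝ) ≤ M := le_max_left _ _
    have hM0 : (0:ℝ) < M := lt_of_lt_of_le one_pos hM1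
    set c₀ : ℝ := δ * M ^ (-((d : ℝ) + 2 * shi)) with hc₀def
    have hc₀ : 0 < c₀ := mul_pos hδ (Real.rpow_pos_of_pos hM0 _)
    -- measure of the exterior collar
    set m : ℝ := (volume (Ω \ Ωi)).toReal with hmdef
    have hmfin : volume (Ω \ Ωi) ≠ ⊤ := by
      refine ne_of_lt (lt_of_le_of_lt (measure_mono Set.diff_subset) ?_)
      exact hΩb.measure_lt_top
    have hm : 0 < m := ENNReal.toReal_pos hpos.ne' hmfin
    refine ⟨min 1 (c₀ * m) / 2, by positivity, ?_⟩
    intro v hv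
    -- pointwise lower bound on the kernel
    have key : ∀ x ∈ Ω, ∀ y ∈ Ω, c₀ * (v x - v y) ^ 2 ≤ (v x - v y) ^ 2 * γ x y := by
      intro x hx y hy
      rcases eq_or_ne x y with rfl | hxy
      · simp
      · have ht : 0 < ‖x - y‖ := norm_pos_iff.mpr (sub_ne_zero.mpr hxy)
        have hxr : ‖x‖ ≤ r := by
          have := hr hx; rwa [Metric.mem_closedBall, dist_zero_right] at this
        have hyr : ‖y‖ ≤ r := by
          have := hr hy; rwa [Metric.mem_closedBall, dist_zero_right] at this
        have htM : ‖x - y‖ ≤ M := by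
          calc ‖x - y‖ ≤ ‖x‖ + ‖y‖ := norm_sub_le _ _
            _ ≤ 2 * r := by linarith
            _ ≤ M := le_max_right _ _
        have hstep1 : M ^ (-((d : ℝ) + 2 * shi)) ≤ M ^ (-((d : ℝ) + s x + s y)) := by
          refine Real.rpow_le_rpow_of_exponent_le hM1 ?_
          have h1 := (hsr x).2; have h2 := (hsr y).2
          linarith
        have hstep2 : M ^ (-((d : ℝ) + s x + s y)) ≤ ‖x - y‖ ^ (-((d : ℝ) + s x + s y)) := by
          refine Real.rpow_le_rpow_of_nonpos ht htM ?_
          have h1 := (hsr x).1; have h2 := (hsr y).1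
          have hd0 : (0:ℝ) ≤ (d : ℝ) := Nat.cast_nonneg _
          linarith
        have hγc : c₀ ≤ γ x y := by
          calc c₀ = δ * M ^ (-((d : ℝ) + 2 * shi)) := rfl
            _ ≤ δ * ‖x - y‖ ^ (-((d : ℝ) + s x + s y)) := by
                exact mul_le_mul_of_nonneg_left (hstep1.trans hstep2) hδ.le
            _ ≤ γ x y := hγlb x y
        have := mul_le_mul_of_nonneg_right hγc (sq_nonneg (v x - v y))
        linarith [this]
    set f := fun p : EuclideanSpace ℝ (Fin d) × EuclideanSpace ℝ (Fin d) =>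
      (v p.1 - v p.2) ^ 2 * γ p.1 p.2 with hfdef
    set g := fun p : EuclideanSpace ℝ (Fin d) × EuclideanSpace ℝ (Fin d) =>
      (v p.1 - v p.2) ^ 2 with hgdef
    have hfi : Integrable f ((volume :
        Measure (EuclideanSpace ℝ (Fin d) × EuclideanSpace ℝ (Fin d))).restrict (Ω ×ˢ Ω)) :=
      hv.2.2
    have hae : ∀ᵐ p ∂((volume :
        Measure (EuclideanSpace ℝ (Fin d) × EuclideanSpace ℝ (Fin d))).restrict (Ω ×ˢ Ω)),
        c₀ * g p ≤ f p := by
      filter_upwards [ae_restrict_mem (hΩm.prod hΩm)] with p hp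
      exact key _ hp.1 _ hp.2
    have hgm : AEStronglyMeasurable g ((volume :
        Measure (EuclideanSpace ℝ (Fin d) × EuclideanSpace ℝ (Fin d))).restrict (Ω ×ˢ Ω)) := by
      have : AEStronglyMeasurable g ((volume.restrict Ω).prod (volume.restrict Ω)) := by
        have hsub' : AEStronglyMeasurable
            (fun p : EuclideanSpace ℝ (Fin d) × EuclideanSpace ℝ (Fin d) => v p.1 - v p.2) ((volume.restrict Ω).prod (volume.restrict Ω)) :=
          hv.1.1.comp_fst.sub hv.1.1.comp_snd
        have : g = fun p => (v p.1 - v p.2) * (v p.1 - v p.2) := by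
          funext p; rw [hgdef]; ring
        rw [this]
        exact hsub'.mul hsub'
      rwa [prodRestrict_eq] at this
    have hgi : Integrable g ((volume :
        Measure (EuclideanSpace ℝ (Fin d) × EuclideanSpace ℝ (Fin d))).restrict (Ω ×ˢ Ω)) := by
      refine Integrable.mono' (hfi.const_mul c₀⁻¹) hgm ?_
      filter_upwards [hae] with p hp
      rw [Real.norm_eq_abs, abs_of_nonneg (sq_nonneg _)]
      have : g p = c₀⁻¹ * (c₀ * g p) := by field_simp
      rw [this]
      exact mul_le_mul_of_nonneg_left hp (inv_nonneg.2 hc₀.le)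
    -- step A : c₀ ∫ g ≤ ∫ f
    have hstepA : c₀ * ∫ p, g p ∂((volume :
        Measure (EuclideanSpace ℝ (Fin d) × EuclideanSpace ℝ (Fin d))).restrict (Ω ×ˢ Ω))
        ≤ ∫ p, f p ∂((volume :
        Measure (EuclideanSpace ℝ (Fin d) × EuclideanSpace ℝ (Fin d))).restrict (Ω ×ˢ Ω)) := by
      rw [← integral_const_mul]
      exact integral_mono_ae (hgi.const_mul c₀) hfi hae
    -- step B : restrict to Ω × (Ω \ Ωi)
    set Q := (volume.restrict Ω).prod (volume.restrict (Ω \ Ωi)) with hQdef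
    have hQR : Q = (volume :
        Measure (EuclideanSpace ℝ (Fin d) × EuclideanSpace ℝ (Fin d))).restrict
        (Ω ×ˢ (Ω \ Ωi)) := prodRestrict_eq Ω (Ω \ Ωi)
    have hstepB : ∫ p, g p ∂Q ≤ ∫ p, g p ∂((volume :
        Measure (EuclideanSpace ℝ (Fin d) × EuclideanSpace ℝ (Fin d))).restrict (Ω ×ˢ Ω)) := by
      rw [hQR]
      refine integral_mono_measure ?_ (Filter.Eventually.of_forall fun p => sq_nonneg _) hgi
      exact Measure.restrict_mono (Set.prod_mono (subset_refl _) Set.diff_subset) le_rfl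
    -- step C-E : compute ∫ g over Q
    have hstepC : ∫ p, g p ∂Q = m * ∫ x in Ω, (v x) ^ 2 := by
      have hzero : ∀ᵐ p ∂Q, v p.2 = 0 :=
        Measure.quasiMeasurePreserving_snd.ae hv.2.1
      have h1 : ∫ p, g p ∂Q = ∫ p : EuclideanSpace ℝ (Fin d) × EuclideanSpace ℝ (Fin d),
          (v p.1) ^ 2 ∂Q := by
        refine integral_congr_ae ?_
        filter_upwards [hzero] with p hp
        rw [hgdef]; simp [hp]
      rw [h1, hQdef, integral_fun_fst (f := fun x => (v x) ^ 2)]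
      rw [measureReal_restrict_apply_univ, measureReal_def, smul_eq_mul, hmdef]
    -- seminorm identity
    have hS : seminormVSq Ω γ v = ∫ p, f p ∂((volume :
        Measure (EuclideanSpace ℝ (Fin d) × EuclideanSpace ℝ (Fin d))).restrict (Ω ×ˢ Ω)) := by
      have h1 : seminormVSq Ω γ v = ∫ p, f p ∂((volume.restrict Ω).prod (volume.restrict Ω)) := by
        refine double_integral_eq Ω (fun x y => (v x - v y) ^ 2 * γ x y) ?_
        rw [prodRestrict_eq]; exact hv.2.2
      rwa [prodRestrict_eq] at h1
    have hbilv : bilinA Ω γ v v = seminormVSq Ω γ v := by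
      rw [bilinA, seminormVSq]
      refine integral_congr_ae (.of_forall fun x => ?_)
      refine integral_congr_ae (.of_forall fun y => ?_)
      ring
    set L : ℝ := ∫ x in Ω, (v x) ^ 2 with hLdef
    have hL0 : 0 ≤ L := hL2nonneg v
    have hS0 : 0 ≤ seminormVSq Ω γ v := hseminonneg v hv
    have hSLB : c₀ * (m * L) ≤ seminormVSq Ω γ v := by
      rw [hS]
      calc c₀ * (m * L) = c₀ * ∫ p, g p ∂Q := by rw [hstepC]
        _ ≤ c₀ * ∫ p, g p ∂((volume :
            Measure (EuclideanSpace ℝ (Fin d) × EuclideanSpace ℝ (Fin d))).restrict (Ω ×ˢ Ω)) :=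
            mul_le_mul_of_nonneg_left hstepB hc₀.le
        _ ≤ _ := hstepA
    rw [hbilv, normVSq, ← hLdef]
    have hmin1 : min 1 (c₀ * m) ≤ 1 := min_le_left _ _
    have hmin2 : min 1 (c₀ * m) ≤ c₀ * m := min_le_right _ _
    have hmin0 : 0 < min 1 (c₀ * m) := lt_min one_pos (by positivity)
    nlinarith [hSLB, hL0, hS0, hmin1, hmin2, hmin0]
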